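/- For every Schwartz function ψ : ℝ → ℂ and all x₁, x₂ ∈ ℝ, the cross-correlation of the wavefunction is recovered from the Wigner distribution by a Fourier transform: ψ(x₁) · conj(ψ(x₂)) = ∫_ℝ W_ψ((x₁+x₂)/2, p) · exp(i (x₁−x₂) p / ħ) dp. -/

import Mathlib

open MeasureTheory

/-- The Wigner distribution of a wavefunction `ψ : ℝ → ℂ`, with Planck constant `hbar`:
`W_ψ(x,p) = (1/(2π hbar)) ∫ conj(ψ(x + x'/2)) ψ(x - x'/2) exp(i p x'/hbar) dx'`. -/
noncomputable def wigner (hbar : ℝ) (ψ : ℝ → ℂ) (x p : ℝ) : ℂ :=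
  ((1 / (2 * Real.pi * hbar) : ℝ) : ℂ) *
    ∫ x' : ℝ, (starRingEnd ℂ) (ψ (x + x' / 2)) * ψ (x - x' / 2) *
      Complex.exp (Complex.I * (p : ℂ) * (x' : ℂ) / (hbar : ℂ))

open FourierTransform SchwartzMap Complex
open scoped RealInnerProductSpace

private lemma schwartz_tg (f : SchwartzMap ℝ ℂ) : Function.HasTemperateGrowth ⇑f := by
  refine ⟨f.smooth', fun n => ?_⟩
  obtain ⟨C, hC⟩ := f.decay' 0 n
  exact ⟨0, C, fun x => by have h := hC x; simp only [pow_zero, one_mul] at h; simp only [pow_zero, mul_one]; exact h⟩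

private lemma affine_tg (c s : ℝ) : Function.HasTemperateGrowth (fun t : ℝ => c + s * t) := by
  have h : ∀ t : ℝ, HasFDerivAt (fun t : ℝ => c + s * t)
      (s • (ContinuousLinearMap.id ℝ ℝ)) t := by
    intro t
    simpa [smul_eq_mul] using ((hasFDerivAt_id t).const_smul s).const_add c
  apply Function.HasTemperateGrowth.of_fderiv (k := 1) (C := |c| + |s|)
  · have : (fderiv ℝ fun t : ℝ => c + s * t) = fun _ => s • (ContinuousLinearMap.id ℝ ℝ) :=
      funext fun t => (h t).fderiv
    rw [this]
    exact Function.HasTemperateGrowth.const _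
  · exact fun t => (h t).differentiableAt
  · intro t
    have h1 : |c + s * t| ≤ |c| + |s| * |t| := (abs_add_le _ _).trans (by rw [abs_mul])
    calc ‖c + s * t‖ ≤ |c| + |s| * |t| := h1
    _ ≤ (|c| + |s|) * (1 + ‖t‖) ^ 1 := by
        simp only [Real.norm_eq_abs, pow_one]
        nlinarith [abs_nonneg c, abs_nonneg s, abs_nonneg t]

/-- Multiplication with conjugation in the second slot, as a real-bilinear map. -/
private noncomputable def Bconj : ℂ →L[ℝ] ℂ →L[ℝ] ℂ :=
  (ContinuousLinearMap.mul ℝ ℂ).bilinearComp (ContinuousLinearMap.id ℝ ℂ)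
    Complex.conjCLE.toContinuousLinearMap

/-- Composition of a Schwartz function with an affine map `t ↦ c + s t`, `s ≠ 0`. -/
private noncomputable def shiftSchwartz (c s : ℝ) (hs : s ≠ 0) :
    SchwartzMap ℝ ℂ →L[ℝ] SchwartzMap ℝ ℂ :=
  SchwartzMap.compCLM ℝ (affine_tg c s)
    ⟨1, (1 + |c|) / |s|, by
      intro t
      have hs' : 0 < |s| := abs_pos.mpr hs
      rw [pow_one, div_mul_eq_mul_div, le_div_iff₀ hs']
      have h1 : |s| * |t| = |c + s*t - c| := by rw [← abs_mul]; ring_nf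
      have h2 : |c + s*t - c| ≤ |c + s*t| + |c| := abs_sub _ _
      have h3 : ‖t‖ * |s| = |s| * |t| := by rw [Real.norm_eq_abs]; ring
      have h4 : |c + s*t| + |c| ≤ (1 + |c|) * (1 + ‖c + s*t‖) := by
        simp only [Real.norm_eq_abs]
        nlinarith [abs_nonneg (c + s*t), abs_nonneg c]
      linarith⟩

/-- The cross-correlation of the wavefunction is recovered from the Wigner
distribution via a Fourier transform:
`ψ(x₁) conj(ψ(x₂)) = ∫ W_ψ((x₁+x₂)/2, p) exp(i (x₁-x₂) p/hbar) dp`. -/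
theorem wigner_cross_correlation (hbar : ℝ) (hhbar : 0 < hbar) (ψ : SchwartzMap ℝ ℂ)
    (x₁ x₂ : ℝ) :
    ψ x₁ * (starRingEnd ℂ) (ψ x₂) =
      ∫ p : ℝ, wigner hbar (⇑ψ) ((x₁ + x₂) / 2) p *
        Complex.exp (Complex.I * ((x₁ : ℂ) - (x₂ : ℂ)) * (p : ℂ) / (hbar : ℂ)) := by
  have hπ : (0:ℝ) < Real.pi := Real.pi_pos
  have hπ' : (Real.pi : ℂ) ≠ 0 := Complex.ofReal_ne_zero.mpr hπ.ne'
  have hh' : (hbar : ℂ) ≠ 0 := Complex.ofReal_ne_zero.mpr hhbar.ne'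
  set x : ℝ := (x₁ + x₂) / 2 with hxdef
  set G : SchwartzMap ℝ ℂ :=
    SchwartzMap.bilinLeftCLM Bconj (schwartz_tg (shiftSchwartz x 2⁻¹ (by norm_num) ψ))
      (shiftSchwartz x (-2⁻¹) (by norm_num) ψ) with hGdef
  have hG : ∀ t : ℝ, G t = ψ (x - t/2) * (starRingEnd ℂ) (ψ (x + t/2)) := by
    intro t
    show ψ (x + (-2⁻¹) * t) * (starRingEnd ℂ) (ψ (x + 2⁻¹ * t)) = _
    rw [show x + (-2⁻¹) * t = x - t/2 by ring, show x + 2⁻¹ * t = x + t/2 by ring]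
  set c : ℝ := 2 * Real.pi * hbar with hcdef
  have hc : (0:ℝ) < c := by positivity
  -- Step 1: the Wigner function is an inverse Fourier transform of G
  have hw : ∀ p : ℝ, wigner hbar (⇑ψ) x p
      = ((1 / c : ℝ) : ℂ) * 𝓕⁻ (⇑G) (p / c) := by
    intro p
    unfold wigner
    rw [Real.fourierInv_eq']
    congr 1
    refine integral_congr_ae (Filter.Eventually.of_forall fun v => ?_)
    dsimp only
    rw [hG v, smul_eq_mul]
    have hinner : (inner ℝ v (p / c) : ℝ) = v * (p / c) := Real.inner_apply _ _
    have hexp : ((2 * Real.pi * (inner ℝ v (p / c) : ℝ) : ℝ) : ℂ) * Complex.I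
        = Complex.I * p * v / hbar := by
      rw [hinner, hcdef]
      push_cast
      field_simp
    rw [hexp]
    ring
  -- Step 2: the integral over p is a second inverse Fourier transform
  have key : (∫ p : ℝ, wigner hbar (⇑ψ) x p *
        Complex.exp (Complex.I * ((x₁ : ℂ) - (x₂ : ℂ)) * (p : ℂ) / (hbar : ℂ)))
      = 𝓕⁻ (𝓕⁻ ⇑G) (x₁ - x₂) := by
    set H : ℝ → ℂ := fun k => ((1 / c : ℝ) : ℂ) * (𝓕⁻ (⇑G) k *
      Complex.exp (((2 * Real.pi * (k * (x₁ - x₂)) : ℝ) : ℂ) * Complex.I)) with hHdef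
    have h1 : ∀ p : ℝ, wigner hbar (⇑ψ) x p *
        Complex.exp (Complex.I * ((x₁ : ℂ) - (x₂ : ℂ)) * (p : ℂ) / (hbar : ℂ)) = H (c⁻¹ * p) := by
      intro p
      rw [hw p, hHdef]
      simp only
      rw [show p / c = c⁻¹ * p by ring]
      rw [show (((2 * Real.pi * ((c⁻¹ * p) * (x₁ - x₂)) : ℝ) : ℂ) * Complex.I)
          = Complex.I * ((x₁ : ℂ) - (x₂ : ℂ)) * (p : ℂ) / (hbar : ℂ) by
        rw [hcdef]; push_cast; field_simp]
      ring
    simp_rw [h1]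
    rw [Measure.integral_comp_inv_mul_left H c]
    rw [Real.fourierInv_eq']
    rw [hHdef]
    have habs : |c| = c := abs_of_pos hc
    beta_reduce
    rw [MeasureTheory.integral_const_mul, habs, Complex.real_smul]
    rw [show ((c:ℂ)) * (((1 / c : ℝ) : ℂ) * ∫ k : ℝ, 𝓕⁻ (⇑G) k *
        Complex.exp (((2 * Real.pi * (k * (x₁ - x₂)) : ℝ) : ℂ) * Complex.I))
      = ∫ k : ℝ, 𝓕⁻ (⇑G) k *
        Complex.exp (((2 * Real.pi * (k * (x₁ - x₂)) : ℝ) : ℂ) * Complex.I) by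
      rw [← mul_assoc]
      norm_cast
      rw [mul_one_div, div_self hc.ne', Complex.ofReal_one, one_mul]]
    refine integral_congr_ae (Filter.Eventually.of_forall fun v => ?_)
    dsimp only
    have hinner : (inner ℝ v (x₁ - x₂) : ℝ) = v * (x₁ - x₂) := Real.inner_apply _ _
    rw [smul_eq_mul, hinner]
    ring
  -- Step 3: Fourier inversion
  rw [key, Real.fourierInv_eq_fourier_neg]
  have hFG : Integrable (𝓕 (⇑G)) volume := by
    have := (SchwartzMap.fourierTransformCLM ℝ G).integrable (μ := volume)
    simpa [SchwartzMap.fourier_coe] using this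
  rw [G.integrable.fourier_fourierInv_eq hFG (G.continuous.continuousAt)]
  rw [hG]
  rw [show x - -(x₁ - x₂)/2 = x₁ by rw [hxdef]; ring,
    show x + -(x₁ - x₂)/2 = x₂ by rw [hxdef]; ring]
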